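/- Let X be a Banach space with a basis that is strongly asymptotically ℓ∞. Then X is locally minimal. -/

import Mathlib

open scoped BigOperators Classical

noncomputable section

section Prelude

variable {X : Type*} [NormedAddCommGroup X] [NormedSpace ℝ X]

/-- The vector with finitely supported coefficients `c` with respect to the sequence `e`. -/
def vecOf (e : ℕ → X) (c : ℕ →₀ ℝ) : X := c.sum fun n a => a • e n

/-- `c < d` : the supports of `c` and `d` are successive. -/
def FsuppLt (c d : ℕ →₀ ℝ) : Prop := ∀ a ∈ c.support, ∀ b ∈ d.support, a < b

/-- The Gowers–Maurey function `f(n) = log₂(n+1)`. -/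
def flog (n : ℕ) : ℝ := Real.logb 2 ((n : ℝ) + 1)

/-- Support of a functional with respect to the basis `e` (via biorthogonal functionals). -/
def fsupp (e : ℕ → X) (f : X →L[ℝ] ℝ) : Set ℕ := {n | f (e n) ≠ 0}

/-- Bimonotonicity of the basis `e`, expressed on finitely supported vectors:
projections onto intervals are contractive. -/
def Bimonotone (e : ℕ → X) : Prop :=
  ∀ (c : ℕ →₀ ℝ) (a b : ℕ), ‖vecOf e (c.filter fun n => n ∈ Finset.Icc a b)‖ ≤ ‖vecOf e c‖

/-- Lower `f`-estimate for a general function `f`. -/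
def LowerEst (e : ℕ → X) (f : ℝ → ℝ) : Prop :=
  ∀ (n : ℕ) (c : Fin n → ℕ →₀ ℝ), (∀ i j : Fin n, i < j → FsuppLt (c i) (c j)) →
    (1 / f (n : ℝ)) * ∑ i, ‖vecOf e (c i)‖ ≤ ‖∑ i, vecOf e (c i)‖

/-- Lower `f`-estimate with `f(n) = log₂(n+1)`. -/
def LowerFEst (e : ℕ → X) : Prop :=
  ∀ (n : ℕ) (c : Fin n → ℕ →₀ ℝ), (∀ i j : Fin n, i < j → FsuppLt (c i) (c j)) →
    (1 / flog n) * ∑ i, ‖vecOf e (c i)‖ ≤ ‖∑ i, vecOf e (c i)‖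

/-- `Y` embeds isomorphically into `Z` (linear isomorphism onto its image). -/
def Embeds (Y Z : Type*) [NormedAddCommGroup Y] [NormedSpace ℝ Y]
    [NormedAddCommGroup Z] [NormedSpace ℝ Z] : Prop :=
  ∃ T : Y →L[ℝ] Z, ∃ c : ℝ, 0 < c ∧ ∀ y, c * ‖y‖ ≤ ‖T y‖

/-- `Y` embeds into `Z` with constant `K` (i.e. `‖T‖ ⬝ ‖T⁻¹‖ ≤ K` after normalisation). -/
def EmbedsWithConst (K : ℝ) (Y Z : Type*) [NormedAddCommGroup Y] [NormedSpace ℝ Y]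
    [NormedAddCommGroup Z] [NormedSpace ℝ Z] : Prop :=
  ∃ T : Y →L[ℝ] Z, ∀ y, ‖y‖ ≤ ‖T y‖ ∧ ‖T y‖ ≤ K * ‖y‖

/-- The closed span `[eₙ : n ∉ S]`. -/
def spanCompl (e : ℕ → X) (S : Set ℕ) : Submodule ℝ X :=
  (Submodule.span ℝ (e '' Sᶜ)).topologicalClosure

/-- `Y` is tight in the basic sequence `e`. -/
def TightIn (e : ℕ → X) (Y : Type*) [NormedAddCommGroup Y] [NormedSpace ℝ Y] : Prop :=
  ∃ I : ℕ → Finset ℕ, (∀ i j : ℕ, i < j → ∀ a ∈ I i, ∀ b ∈ I j, a < b) ∧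
    ∀ A : Set ℕ, A.Infinite → ¬ Embeds Y ↥(spanCompl e (⋃ i ∈ A, (I i : Set ℕ)))

/-- The basis `e` is tight: every infinite-dimensional Banach space is tight in it. -/
def TightBasis (e : ℕ → X) : Prop :=
  ∀ (Y : Type) [NormedAddCommGroup Y] [NormedSpace ℝ Y] [CompleteSpace Y],
    ¬ FiniteDimensional ℝ Y → TightIn e Y

end Prelude


set_option maxHeartbeats 1000000
set_option synthInstance.maxHeartbeats 1000000

section Aux

variable {X : Type} [NormedAddCommGroup X] [NormedSpace ℝ X] [CompleteSpace X]

lemma vecOf_eq_lc (e : ℕ → X) (c : ℕ →₀ ℝ) : vecOf e c = Finsupp.linearCombination ℝ e c :=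
  (Finsupp.linearCombination_apply ℝ c).symm

lemma vecOf_smul (e : ℕ → X) (t : ℝ) (c : ℕ →₀ ℝ) : vecOf e (t • c) = t • vecOf e c := by
  simp [vecOf_eq_lc]

lemma exists_unit_tail (e : ℕ → X)
    (hbasis : (Submodule.span ℝ (Set.range e)).topologicalClosure = ⊤)
    (Z : Submodule ℝ X) (hZ : ¬ FiniteDimensional ℝ Z) (N : ℕ) :
    ∃ z : X, z ∈ Z ∧ z ∈ (Submodule.span ℝ (e '' Set.Ici N)).topologicalClosure ∧ ‖z‖ = 1 := by
  set V : Submodule ℝ X := (Submodule.span ℝ (e '' Set.Ici N)).topologicalClosure with hV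
  haveI hVc : IsClosed (V : Set X) := (Submodule.span ℝ (e '' Set.Ici N)).isClosed_topologicalClosure
  -- the quotient is finite dimensional
  haveI : FiniteDimensional ℝ (X ⧸ V) := by
    set Q : Submodule ℝ (X ⧸ V) := Submodule.span ℝ (V.mkQ '' (e '' Set.Iio N)) with hQ
    haveI : FiniteDimensional ℝ Q :=
      FiniteDimensional.span_of_finite ℝ (((Set.finite_Iio N).image e).image _)
    have hQtop : Q = ⊤ := by
      rw [eq_top_iff]
      intro q _
      obtain ⟨x, rfl⟩ := V.mkQ_surjective q
      have hx : x ∈ closure (Submodule.span ℝ (Set.range e) : Set X) := by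
        have := congrArg (fun (p : Submodule ℝ X) => (p : Set X)) hbasis
        simp only [Submodule.topologicalClosure_coe] at this
        rw [this]; trivial
      have hmap : V.mkQ '' (Submodule.span ℝ (Set.range e) : Set X) ⊆ (Q : Set (X ⧸ V)) := by
        intro q' hq'
        obtain ⟨x', hx', rfl⟩ := hq'
        have hle : Submodule.map V.mkQ (Submodule.span ℝ (Set.range e)) ≤ Q := by
          rw [Submodule.map_span, Submodule.span_le]
          rintro _ ⟨_, ⟨k, rfl⟩, rfl⟩
          by_cases hk : k < N
          · exact Submodule.subset_span ⟨e k, ⟨k, hk, rfl⟩, rfl⟩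
          · have hek : e k ∈ V :=
              (Submodule.span ℝ (e '' Set.Ici N)).le_topologicalClosure
                (Submodule.subset_span ⟨k, not_lt.1 hk, rfl⟩)
            have : V.mkQ (e k) = 0 := by
              rw [Submodule.mkQ_apply, Submodule.Quotient.mk_eq_zero]; exact hek
            rw [this]; exact Q.zero_mem
        exact hle ⟨x', hx', rfl⟩
      have hcont : Continuous V.mkQ := continuous_quot_mk
      have hmem : V.mkQ x ∈ closure (V.mkQ '' (Submodule.span ℝ (Set.range e) : Set X)) :=
        (Set.MapsTo.closure (Set.mapsTo_image _ _) hcont) hx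
      have hQclosed : IsClosed (Q : Set (X ⧸ V)) := Q.closed_of_finiteDimensional
      exact (hQclosed.closure_subset_iff.2 hmap) hmem
    rw [hQtop] at this
    exact Submodule.topEquiv.finiteDimensional
  -- find a nonzero element of Z ∩ V
  have hker : LinearMap.ker (V.mkQ ∘ₗ Z.subtype) ≠ ⊥ := by
    intro h
    exact hZ (FiniteDimensional.of_injective (V.mkQ ∘ₗ Z.subtype)
      (LinearMap.ker_eq_bot.1 h))
  obtain ⟨z, hz, hz0⟩ := (Submodule.ne_bot_iff _).1 hker
  have hzV : (z : X) ∈ V := by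
    have := hz
    simp only [LinearMap.mem_ker, LinearMap.comp_apply, Submodule.subtype_apply,
      Submodule.mkQ_apply, Submodule.Quotient.mk_eq_zero] at this
    exact this
  have hzne : (z : X) ≠ 0 := fun h => hz0 (Subtype.ext h)
  refine ⟨(‖(z : X)‖ : ℝ)⁻¹ • (z : X), Z.smul_mem _ z.2, V.smul_mem _ hzV, ?_⟩
  exact norm_smul_inv_norm (𝕜 := ℝ) hzne

lemma tail_approx (e : ℕ → X) {z : X} {N : ℕ}
    (hz : z ∈ (Submodule.span ℝ (e '' Set.Ici N)).topologicalClosure) {ε : ℝ} (hε : 0 < ε) :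
    ∃ c : ℕ →₀ ℝ, (∀ k ∈ c.support, N ≤ k) ∧ ‖z - vecOf e c‖ < ε := by
  have hz' : z ∈ closure (Submodule.span ℝ (e '' Set.Ici N) : Set X) := hz
  rw [Metric.mem_closure_iff] at hz'
  obtain ⟨y, hy, hdist⟩ := hz' ε hε
  obtain ⟨l, hl, rfl⟩ := Finsupp.mem_span_image_iff_linearCombination ℝ |>.1 hy
  refine ⟨l, fun k hk => hl hk, ?_⟩
  rw [vecOf_eq_lc] at *
  simpa [dist_eq_norm] using hdist

lemma exists_blocks (e : ℕ → X)
    (hbasis : (Submodule.span ℝ (Set.range e)).topologicalClosure = ⊤)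
    (Z : Submodule ℝ X) (hZ : ¬ FiniteDimensional ℝ Z) {ε : ℝ} (hε : 0 < ε) :
    ∀ (n N : ℕ), ∃ (z : Fin n → X) (c : Fin n → (ℕ →₀ ℝ)),
      (∀ i, z i ∈ Z) ∧ (∀ i, ‖z i‖ = 1) ∧ (∀ i, ∀ k ∈ (c i).support, N ≤ k) ∧
      (∀ i, ‖z i - vecOf e (c i)‖ < ε) ∧ (∀ i j, i < j → FsuppLt (c i) (c j)) := by
  intro n
  induction n with
  | zero => exact fun N => ⟨Fin.elim0, Fin.elim0, fun i => i.elim0, fun i => i.elim0,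
      fun i => i.elim0, fun i => i.elim0, fun i => i.elim0⟩
  | succ n IH =>
    intro N
    obtain ⟨z0, hz0Z, hz0V, hz0n⟩ := exists_unit_tail e hbasis Z hZ N
    obtain ⟨c0, hc0s, hc0a⟩ := tail_approx e hz0V hε
    set M : ℕ := max N (c0.support.sup id + 1) with hM
    obtain ⟨z', c', h1, h2, h3, h4, h5⟩ := IH M
    refine ⟨Fin.cons z0 z', Fin.cons c0 c', ?_, ?_, ?_, ?_, ?_⟩
    · intro i; refine Fin.cases ?_ ?_ i <;> simp [hz0Z, h1]
    · intro i; refine Fin.cases ?_ ?_ i <;> simp [hz0n, h2]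
    · intro i
      refine Fin.cases ?_ ?_ i
      · simpa using hc0s
      · intro j k hk
        simp only [Fin.cons_succ] at hk
        exact le_trans (le_max_left _ _) (h3 j k hk)
    · intro i; refine Fin.cases ?_ ?_ i <;> simp [hc0a, h4]
    · intro i j hij
      induction j using Fin.cases with
      | zero => exact absurd hij (Fin.not_lt.mpr (Fin.zero_le i))
      | succ j' =>
        induction i using Fin.cases with
        | zero =>
          intro a ha b hb
          simp only [Fin.cons_zero] at ha
          simp only [Fin.cons_succ] at hb
          have h1' : a ≤ c0.support.sup id := Finset.le_sup (f := id) ha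
          have h2' : M ≤ b := h3 j' b hb
          omega
        | succ i' =>
          simp only [Fin.cons_succ]
          exact h5 i' j' (by exact_mod_cast Fin.succ_lt_succ_iff.mp hij)

lemma linfty_system (e : ℕ → X)
    (hbasis : (Submodule.span ℝ (Set.range e)).topologicalClosure = ⊤)
    (C : ℝ) (hC : 1 ≤ C) (fg : ℕ → ℕ)
    (hasym : ∀ (n : ℕ) (c : Fin n → ℕ →₀ ℝ),
      (∀ i, ‖vecOf e (c i)‖ = 1) →
      (∀ i, ∀ k ∈ (c i).support, fg n ≤ k) →
      (∀ i j : Fin n, i ≠ j → Disjoint (c i).support (c j).support) →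
      ∃ d : ℝ, 0 < d ∧ ∀ a : Fin n → ℝ,
        d * (⨆ i, |a i|) ≤ ‖∑ i, a i • vecOf e (c i)‖ ∧
        ‖∑ i, a i • vecOf e (c i)‖ ≤ C * d * (⨆ i, |a i|))
    (Z : Submodule ℝ X) (hZ : ¬ FiniteDimensional ℝ Z) (n : ℕ) (hn : 0 < n) :
    ∃ z : Fin n → X, (∀ i, z i ∈ Z) ∧ ∀ a : Fin n → ℝ,
      (3/(4*C)) * (⨆ i, |a i|) ≤ ‖∑ i, a i • z i‖ ∧
      ‖∑ i, a i • z i‖ ≤ (2*C) * (⨆ i, |a i|) := by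
  have hC0 : (0:ℝ) < C := lt_of_lt_of_le one_pos hC
  have hn1 : (1:ℝ) ≤ n := by exact_mod_cast hn
  set ε : ℝ := 1/(8*C*n) with hεdef
  have hε : 0 < ε := by positivity
  have hε8 : ε ≤ 1/8 := by
    rw [hεdef, div_le_div_iff₀ (by positivity) (by norm_num)]
    nlinarith
  obtain ⟨z, c, hzZ, hzn, hcs, hca, hlt⟩ := exists_blocks e hbasis Z hZ hε n (fg n)
  set x : Fin n → X := fun i => vecOf e (c i) with hx
  have hxlb : ∀ i, 1 - ε ≤ ‖x i‖ := by
    intro i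
    have := norm_sub_norm_le (z i) (x i)
    have h2 := (hca i).le
    rw [hzn i] at this
    linarith
  have hxub : ∀ i, ‖x i‖ ≤ 1 + ε := by
    intro i
    have := norm_sub_norm_le (x i) (z i)
    rw [hzn i, norm_sub_rev] at this
    have h2 := (hca i).le
    linarith
  have hxpos : ∀ i, 0 < ‖x i‖ := fun i => lt_of_lt_of_le (by linarith [hε8]) (hxlb i)
  set ct : Fin n → (ℕ →₀ ℝ) := fun i => (‖x i‖)⁻¹ • c i with hct
  have hvct : ∀ i, vecOf e (ct i) = (‖x i‖)⁻¹ • x i := fun i => vecOf_smul e _ _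
  have hctn : ∀ i, ‖vecOf e (ct i)‖ = 1 := by
    intro i
    rw [hvct i, norm_smul]
    simp [abs_of_pos (inv_pos.2 (hxpos i)), inv_mul_cancel₀ (ne_of_gt (hxpos i))]
  have hcts : ∀ i, ∀ k ∈ (ct i).support, fg n ≤ k :=
    fun i k hk => hcs i k (Finsupp.support_smul hk)
  have hdisj : ∀ i j : Fin n, i ≠ j → Disjoint (ct i).support (ct j).support := by
    intro i j hij
    rw [Finset.disjoint_left]
    intro a hai haj
    rcases lt_or_gt_of_ne hij with h | h
    · exact lt_irrefl a (hlt i j h a (Finsupp.support_smul hai) a (Finsupp.support_smul haj))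
    · exact lt_irrefl a (hlt j i h a (Finsupp.support_smul haj) a (Finsupp.support_smul hai))
  obtain ⟨d, hd0, hdP⟩ := hasym n ct hctn hcts hdisj
  set xt : Fin n → X := fun i => vecOf e (ct i) with hxt
  -- bounds on d
  have i0 : Fin n := ⟨0, hn⟩
  haveI : Nonempty (Fin n) := ⟨i0⟩
  have hbdd : ∀ a : Fin n → ℝ, BddAbove (Set.range fun i => |a i|) :=
    fun a => Set.Finite.bddAbove (Set.finite_range _)
  have hsup1 : (⨆ j, |(fun j => if j = i0 then (1:ℝ) else 0) j|) = 1 := by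
    apply le_antisymm
    · apply ciSup_le
      intro j
      by_cases h : j = i0 <;> simp [h]
    · have := le_ciSup (hbdd fun j => if j = i0 then (1:ℝ) else 0) i0
      simpa using this
  have hd1 : d ≤ 1 ∧ 1 ≤ C * d := by
    obtain ⟨hl, hu⟩ := hdP (fun j => if j = i0 then (1:ℝ) else 0)
    rw [hsup1] at hl hu
    have hsum : ∑ i, (if i = i0 then (1:ℝ) else 0) • xt i = xt i0 := by
      rw [Finset.sum_eq_single i0] <;> simp +contextual
    rw [hsum, hctn i0] at hl hu
    constructor <;> linarith
  -- distance between z i and xt i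
  have hzxt : ∀ i, ‖z i - xt i‖ ≤ 2*ε := by
    intro i
    have h1 : ‖x i - xt i‖ ≤ ε := by
      have : x i - xt i = (1 - (‖x i‖)⁻¹) • x i := by
        rw [show xt i = (‖x i‖)⁻¹ • x i from hvct i, sub_smul, one_smul]
      rw [this, norm_smul, Real.norm_eq_abs]
      have hxne : ‖x i‖ ≠ 0 := ne_of_gt (hxpos i)
      have : |1 - (‖x i‖)⁻¹| * ‖x i‖ = |‖x i‖ - 1| := by
        rw [← abs_of_pos (hxpos i), ← abs_mul, sub_mul, one_mul,
          abs_of_pos (hxpos i), inv_mul_cancel₀ hxne, abs_sub_comm]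
      rw [this, abs_sub_le_iff]
      constructor <;> [linarith [hxub i]; linarith [hxlb i]]
    calc ‖z i - xt i‖ ≤ ‖z i - x i‖ + ‖x i - xt i‖ := by
          have := norm_add_le (z i - x i) (x i - xt i); simpa using this
      _ ≤ ε + ε := add_le_add (hca i).le h1
      _ = 2*ε := by ring
  refine ⟨z, hzZ, ?_⟩
  intro a
  set s : ℝ := ⨆ i, |a i| with hs
  have hsa : ∀ i, |a i| ≤ s := fun i => le_ciSup (hbdd a) i
  have hs0 : 0 ≤ s := le_trans (abs_nonneg (a i0)) (hsa i0)
  have hdiff : ‖∑ i, a i • z i - ∑ i, a i • xt i‖ ≤ (n : ℝ) * (2*ε) * s := by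
    rw [← Finset.sum_sub_distrib]
    calc ‖∑ i, (a i • z i - a i • xt i)‖ ≤ ∑ i, ‖a i • z i - a i • xt i‖ :=
          norm_sum_le _ _
      _ ≤ ∑ _i : Fin n, (2*ε) * s := by
          apply Finset.sum_le_sum
          intro i _
          rw [← smul_sub, norm_smul, Real.norm_eq_abs]
          calc |a i| * ‖z i - xt i‖ ≤ s * (2*ε) :=
                mul_le_mul (hsa i) (hzxt i) (norm_nonneg _) hs0
            _ = (2*ε) * s := by ring
      _ = (n : ℝ) * (2*ε) * s := by
          rw [Finset.sum_const, Finset.card_univ, Fintype.card_fin]; push_cast; ring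
  have h2nε : (n : ℝ) * (2*ε) = 1/(4*C) := by
    rw [hεdef]; field_simp; ring
  obtain ⟨hl, hu⟩ := hdP a
  have hd1C : 1/C ≤ d := by
    rw [div_le_iff₀ hC0]; linarith [hd1.2]
  constructor
  · have h1 : ‖∑ i, a i • z i‖ ≥ ‖∑ i, a i • xt i‖ - (n : ℝ) * (2*ε) * s := by
      have := norm_sub_norm_le (∑ i, a i • xt i) (∑ i, a i • z i)
      rw [norm_sub_rev] at this
      linarith [hdiff]
    have h2 : d * s - 1/(4*C) * s ≤ ‖∑ i, a i • z i‖ := by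
      rw [← h2nε]; linarith
    have h3 : (1/C) * s - 1/(4*C) * s ≤ d * s - 1/(4*C) * s := by
      have := mul_le_mul_of_nonneg_right hd1C hs0
      linarith
    have h4 : (3/(4*C)) * s = (1/C) * s - 1/(4*C) * s := by field_simp; ring
    linarith
  · have h1 : ‖∑ i, a i • z i‖ ≤ ‖∑ i, a i • xt i‖ + (n : ℝ) * (2*ε) * s := by
      have := norm_sub_norm_le (∑ i, a i • z i) (∑ i, a i • xt i)
      linarith [hdiff]
    have h2 : C * d * s ≤ C * s := by
      have := mul_le_mul_of_nonneg_left hd1.1 (le_of_lt hC0)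
      nlinarith
    have h3 : (n : ℝ) * (2*ε) * s ≤ C * s := by
      rw [h2nε]
      have : 1/(4*C) ≤ C := by
        rw [div_le_iff₀ (by positivity)]; nlinarith
      nlinarith
    nlinarith

end Aux

/-- a space with a strongly asymptotically `ℓ∞` basis is locally minimal. -/
theorem stmt8 {X : Type} [NormedAddCommGroup X] [NormedSpace ℝ X] [CompleteSpace X]
    (e : ℕ → X)
    (hbasis : (Submodule.span ℝ (Set.range e)).topologicalClosure = ⊤)
    (C : ℝ) (hC : 1 ≤ C) (fg : ℕ → ℕ)
    (hasym : ∀ (n : ℕ) (c : Fin n → ℕ →₀ ℝ),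
      (∀ i, ‖vecOf e (c i)‖ = 1) →
      (∀ i, ∀ k ∈ (c i).support, fg n ≤ k) →
      (∀ i j : Fin n, i ≠ j → Disjoint (c i).support (c j).support) →
      ∃ d : ℝ, 0 < d ∧ ∀ a : Fin n → ℝ,
        d * (⨆ i, |a i|) ≤ ‖∑ i, a i • vecOf e (c i)‖ ∧
        ‖∑ i, a i • vecOf e (c i)‖ ≤ C * d * (⨆ i, |a i|)) :
    ∃ K : ℝ, 1 ≤ K ∧ ∀ Z : Submodule ℝ X, IsClosed (Z : Set X) →
      ¬ FiniteDimensional ℝ Z →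
      ∀ F : Submodule ℝ X, FiniteDimensional ℝ F → EmbedsWithConst K ↥F ↥Z := by
  have hC0 : (0:ℝ) < C := lt_of_lt_of_le one_pos hC
  refine ⟨12*C^2, by nlinarith, ?_⟩
  intro Z _hZc hZfd F hF
  haveI := hF
  haveI : FiniteDimensional ℝ (↥F →L[ℝ] ℝ) := inferInstance
  haveI : ProperSpace (↥F →L[ℝ] ℝ) := FiniteDimensional.proper ℝ (↥F →L[ℝ] ℝ)
  -- a 1/2-net of the dual unit ball
  have hcomp : IsCompact (Metric.closedBall (0 : ↥F →L[ℝ] ℝ) 1) := isCompact_closedBall _ _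
  obtain ⟨t, htc⟩ := hcomp.elim_finite_subcover (fun g : ↥F →L[ℝ] ℝ => Metric.ball g (1/2))
    (fun g => Metric.isOpen_ball)
    (fun x _ => Set.mem_iUnion.2 ⟨x, Metric.mem_ball_self (by norm_num)⟩)
  set ft : Finset (↥F →L[ℝ] ℝ) := t.filter (fun g => ‖g‖ ≤ 3/2) with hft
  have hcover : ∀ g : ↥F →L[ℝ] ℝ, ‖g‖ ≤ 1 → ∃ h ∈ ft, dist g h < 1/2 := by
    intro g hg
    have hmem : g ∈ Metric.closedBall (0 : ↥F →L[ℝ] ℝ) 1 := by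
      have hdg : dist g 0 = ‖g‖ := (dist_eq_norm g 0).trans (by rw [sub_zero])
      exact Metric.mem_closedBall.2 (le_of_eq_of_le hdg hg)
    obtain ⟨y, hy, hgy⟩ := Set.mem_iUnion₂.1 (htc hmem)
    have hdy : dist g y < 1/2 := Metric.mem_ball.1 hgy
    have hyn : ‖y‖ ≤ 3/2 := by
      have h1 : ‖g - y‖ < 1/2 := lt_of_eq_of_lt (dist_eq_norm g y).symm hdy
      have h2 : ‖y‖ ≤ ‖g‖ + ‖g - y‖ := by
        have := norm_sub_norm_le g y
        have := norm_nonneg (g - y)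
        nlinarith [abs_norm_sub_norm_le g y, le_abs_self (‖g‖ - ‖y‖), neg_abs_le (‖g‖ - ‖y‖)]
      linarith
    exact ⟨y, by simp [hft, hy, hyn], hdy⟩
  have hftne : ft.Nonempty := by
    obtain ⟨h, hh, _⟩ := hcover 0 (by
      have : ‖(0 : ↥F →L[ℝ] ℝ)‖ = 0 := ContinuousLinearMap.opNorm_zero
      rw [this]; norm_num)
    exact ⟨h, hh⟩
  set n : ℕ := ft.card with hn
  have hnpos : 0 < n := Finset.card_pos.2 hftne
  set f : Fin n → (↥F →L[ℝ] ℝ) := fun i => (ft.equivFin.symm i : ↥F →L[ℝ] ℝ) with hf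
  have hfnorm : ∀ i, ‖f i‖ ≤ 3/2 := by
    intro i
    have hmem : f i ∈ ft := (ft.equivFin.symm i).2
    exact (Finset.mem_filter.1 hmem).2
  have hfnet : ∀ g : ↥F →L[ℝ] ℝ, ‖g‖ ≤ 1 → ∃ i, ‖g - f i‖ < 1/2 := by
    intro g hg
    obtain ⟨h, hh, hd⟩ := hcover g hg
    refine ⟨ft.equivFin ⟨h, hh⟩, ?_⟩
    have hfe : f (ft.equivFin ⟨h, hh⟩) = h := by
      rw [hf]; simp
    rw [hfe]
    exact lt_of_eq_of_lt (dist_eq_norm g h).symm hd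
  -- the ℓ∞ⁿ system in Z
  obtain ⟨z, hzZ, hzP⟩ := linfty_system e hbasis C hC fg hasym Z hZfd n hnpos
  -- the embedding
  set L : ↥F →ₗ[ℝ] X := ∑ i : Fin n, (f i).toLinearMap.smulRight (z i) with hL
  have hLy : ∀ y : ↥F, L y = ∑ i, f i y • z i := by
    intro y
    rw [hL, LinearMap.sum_apply]
    simp [LinearMap.smulRight_apply]
  have hmem : ∀ y : ↥F, L y ∈ Z := by
    intro y
    rw [hLy]
    exact Submodule.sum_mem _ fun i _ => Z.smul_mem _ (hzZ i)
  set L' : ↥F →ₗ[ℝ] ↥Z := L.codRestrict Z hmem with hL'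
  refine ⟨(4*C) • (LinearMap.toContinuousLinearMap L'), ?_⟩
  intro y
  have hbdd : BddAbove (Set.range fun i => |f i y|) := Set.Finite.bddAbove (Set.finite_range _)
  haveI : Nonempty (Fin n) := ⟨⟨0, hnpos⟩⟩
  set s : ℝ := ⨆ i, |f i y| with hs
  have hsup : s ≤ (3/2) * ‖y‖ := by
    apply ciSup_le
    intro i
    calc |f i y| ≤ ‖f i‖ * ‖y‖ := (f i).le_opNorm y
      _ ≤ (3/2) * ‖y‖ := by
          have := hfnorm i
          nlinarith [norm_nonneg y]
  have hslow : ‖y‖ / 2 ≤ s := by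
    by_cases hy : y = 0
    · have hs0 : (0:ℝ) ≤ s := le_trans (abs_nonneg _) (le_ciSup hbdd ⟨0, hnpos⟩)
      have : ‖y‖ = 0 := by rw [hy, norm_zero]
      rw [this]
      linarith
    · obtain ⟨g, hg1, hg2⟩ := exists_dual_vector ℝ (y : ↥F) (norm_ne_zero_iff.mpr hy)
      obtain ⟨i, hi⟩ := hfnet g (le_of_eq hg1)
      have h1 : |g y - f i y| ≤ (1/2) * ‖y‖ := by
        calc |g y - f i y| = |(g - f i) y| := by simp
          _ ≤ ‖g - f i‖ * ‖y‖ := (g - f i).le_opNorm y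
          _ ≤ (1/2) * ‖y‖ := by nlinarith [norm_nonneg y, hi]
      have h2 : g y = ‖y‖ := by exact_mod_cast hg2
      have h3 : ‖y‖ - (1/2) * ‖y‖ ≤ |f i y| := by
        have := abs_sub_abs_le_abs_sub (g y) (f i y)
        rw [h2] at h1
        have := abs_nonneg (f i y)
        cases abs_sub_le_iff.1 h1 with
        | intro ha hb => linarith [le_abs_self (f i y), abs_nonneg (f i y)]
      calc ‖y‖ / 2 = ‖y‖ - (1/2) * ‖y‖ := by ring
        _ ≤ |f i y| := h3
        _ ≤ s := le_ciSup hbdd i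
  have hTy : ‖((4*C) • (LinearMap.toContinuousLinearMap L')) y‖ = 4*C * ‖L y‖ := by
    have h1 : ((4*C) • (LinearMap.toContinuousLinearMap L')) y
        = (4*C) • ((LinearMap.toContinuousLinearMap L') y) := rfl
    have h2 : ((LinearMap.toContinuousLinearMap L') y : ↥Z) = L' y := by
      rw [LinearMap.coe_toContinuousLinearMap']
    have h3 : ‖L' y‖ = ‖L y‖ := rfl
    rw [h1, h2, norm_smul, h3, Real.norm_eq_abs, abs_of_pos (by positivity : (0:ℝ) < 4*C)]
  obtain ⟨hl, hu⟩ := hzP (fun i => f i y)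
  rw [← hLy y] at hl hu
  have hny : (0:ℝ) ≤ ‖y‖ := norm_nonneg y
  constructor
  · rw [hTy]
    have h1 : (3/(4*C)) * s ≤ ‖L y‖ := hl
    have e1 : 4*C * ((3/(4*C)) * s) ≤ 4*C * ‖L y‖ :=
      mul_le_mul_of_nonneg_left h1 (by positivity)
    have h2 : 4*C * ((3/(4*C)) * s) = 3 * s := by field_simp
    linarith [e1, h2, hslow, hny]
  · rw [hTy]
    have h1 : ‖L y‖ ≤ (2*C) * s := hu
    have e1 : 4*C*‖L y‖ ≤ 4*C*((2*C)*s) :=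
      mul_le_mul_of_nonneg_left h1 (by positivity)
    have e2 : 8*C^2*s ≤ 8*C^2*((3/2) * ‖y‖) :=
      mul_le_mul_of_nonneg_left hsup (by positivity)
    have h2 : 4*C*((2*C)*s) = 8*C^2*s := by ring
    have h3 : 8*C^2*((3/2) * ‖y‖) = 12*C^2*‖y‖ := by ring
    linarith [e1, e2, h2, h3]
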